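/- arXiv:1809.03386 — 3 statements merged into one kernel-verified Lean document; each statement's English description precedes it below -/
import Mathlib

section
/- Let (V,m',d) be a resolution of the A∞-algebra (W,m_W), with the associated bigraded DGLA L̄ = tL with differential ∂ = [m'+d,−]. Then the cohomology of L̄ with respect to ∂'' = [d,−] is concentrated in resolution degree zero: H^q_{∂''}(L̄) = 0 for q > 0, and H⁰_{∂''}(L̄) = ker ∂'' ∩ L̄^{•,0}. -/
/-- The sign `(-1)^n` for an integer `n`. -/
def ksign (n : ℤ) : ℤ := if Even n then 1 else -1

/-- A model of `Hom(T(V),V)` for a graded vector space `V` with homogeneous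
basis `S`: a family of multilinear maps, recorded by their values on basis
tuples (of every arity `n`). -/
abbrev HomT (k S : Type) [Field k] : Type := (n : ℕ) → (ℕ → S) → (S →₀ k)

/-- The Gerstenhaber composition `f ∘ g`:
`(f ∘ g)(v₁ ⊗ ⋯ ⊗ v_{m+n-1}) = ∑ᵢ (-1)^{|g|(|v₁|+⋯+|vᵢ|)} f(v₁ ⊗ ⋯ ⊗ vᵢ ⊗ g(v_{i+1} ⊗ ⋯ ⊗ v_{i+m}) ⊗ ⋯)`,
where `dg = |g|` is the degree of `g`. -/
noncomputable def circ {k S : Type} [Field k] (deg : S → ℤ) (dg : ℤ)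
    (f g : HomT k S) : HomT k S :=
  fun N v =>
    ∑ m ∈ Finset.range (N + 1), ∑ i ∈ Finset.range (N - m + 1),
      ksign (dg * ∑ j ∈ Finset.range i, deg (v j)) •
        (g m (fun j => v (i + j))).sum
          (fun s c => c • f (N - m + 1)
            (fun j => if j < i then v j else if j = i then s else v (j + m - 1)))

/-- The Gerstenhaber bracket `[f,g] = f ∘ g - (-1)^{|f||g|} g ∘ f` of homogeneous
maps `f`, `g` of degrees `df`, `dg`. -/
noncomputable def gbracket {k S : Type} [Field k] (deg : S → ℤ) (df dg : ℤ)
    (f g : HomT k S) : HomT k S :=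
  circ deg dg f g - ksign (df * dg) • circ deg df g f

/-- `f` is homogeneous of degree `d` as an element of `Hom(T(V),V)`. -/
def IsHomog {k S : Type} [Field k] (deg : S → ℤ) (f : HomT k S) (d : ℤ) : Prop :=
  ∀ n v s, (f n v) s ≠ 0 → deg s = (∑ j ∈ Finset.range n, deg (v j)) + d


/-- Linear extension of a map `S → (S →₀ k)` defined on a basis `S`. -/
noncomputable def lext {k S : Type} [Field k] (φ : S → (S →₀ k)) (x : S →₀ k) : S →₀ k :=
  x.sum fun s c => c • φ s

/-- A linear map `V → V` (given on the basis) viewed as an arity-1 element of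
`Hom(T(V),V)`. -/
noncomputable def arity1 {k S : Type} [Field k] (db : S → (S →₀ k)) : HomT k S :=
  fun n v => if n = 1 then db (v 0) else 0

namespace AuxRes

variable {k S : Type} [Field k]

lemma ksign_mul_self (a : ℤ) : ksign a * ksign a = 1 := by
  unfold ksign; split <;> ring

lemma ksign_sub_one_mul (a : ℤ) : ksign (a - 1) * ksign a = -1 := by
  simp only [ksign, Int.even_sub_one]
  by_cases h : Even a <;> simp [h]

lemma lext_eq (φ : S → S →₀ k) : lext φ = ⇑(Finsupp.linearCombination k φ) := by
  funext x; rw [lext, Finsupp.linearCombination_apply]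

lemma lext_zero (φ : S → S →₀ k) : lext φ (0 : S →₀ k) = 0 := by
  rw [lext_eq]; exact map_zero _

lemma lext_zsmul (φ : S → S →₀ k) (c : ℤ) (x : S →₀ k) :
    lext φ (c • x) = c • lext φ x := by
  rw [lext_eq]; exact map_zsmul _ c x

lemma lext_ne_zero {φ : S → S →₀ k} {x : S →₀ k} {t : S} (hne : lext φ x t ≠ 0) :
    ∃ s, x s ≠ 0 ∧ φ s t ≠ 0 := by
  rw [lext, Finsupp.sum] at hne
  rw [Finset.sum_apply'] at hne
  obtain ⟨s, hs, hne⟩ := Finset.exists_ne_zero_of_sum_ne_zero hne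
  refine ⟨s, Finsupp.mem_support_iff.mp hs, fun h0 => hne ?_⟩
  rw [Finsupp.smul_apply, h0, smul_zero]

/-- (d ∘ g) N v = d applied to g N v. -/
lemma circ_arity1_left (deg' : S → ℤ) (dg : ℤ) (db : S → S →₀ k) (g : HomT k S)
    (N : ℕ) (v : ℕ → S) :
    circ deg' dg (arity1 db) g N v = lext db (g N v) := by
  unfold circ
  rw [Finset.sum_eq_single_of_mem N (Finset.self_mem_range_succ N) ?h0]
  · simp [Nat.sub_self, arity1, ksign, lext]
  case h0 =>
    intro m hm hne
    have h1 : N - m + 1 ≠ 1 := by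
      have := Finset.mem_range.mp hm; omega
    apply Finset.sum_eq_zero
    intro i _
    simp [arity1, h1, show N - m ≠ 0 by omega]

/-- the precomposition operator `g ∘ d` -/
noncomputable def Pd (deg' : S → ℤ) (db : S → S →₀ k) (g : HomT k S)
    (N : ℕ) (v : ℕ → S) : S →₀ k :=
  ∑ i ∈ Finset.range N, ksign (∑ j ∈ Finset.range i, deg' (v j)) •
    (db (v i)).sum
      (fun s c => c • g N (fun j => if j < i then v j else if j = i then s else v j))

lemma circ_arity1_right (deg' : S → ℤ) (db : S → S →₀ k) (g : HomT k S)
    (N : ℕ) (v : ℕ → S) :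
    circ deg' 1 g (arity1 db) N v = Pd deg' db g N v := by
  unfold circ Pd
  rcases Nat.eq_zero_or_pos N with hN | hN
  · subst hN
    simp [arity1]
  · have hN1 : N - 1 + 1 = N := by omega
    rw [Finset.sum_eq_single_of_mem 1 (Finset.mem_range.mpr (by omega)) ?h0]
    · simp only [hN1, one_mul]
      refine Finset.sum_congr rfl fun i _ => ?_
      simp [arity1]
    case h0 =>
      intro m hm hne
      apply Finset.sum_eq_zero
      intro i _
      simp [arity1, hne]

lemma gbracket_arity1 (deg' : S → ℤ) (dg : ℤ) (db : S → S →₀ k) (g : HomT k S)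
    (N : ℕ) (v : ℕ → S) :
    gbracket deg' 1 dg (arity1 db) g N v
      = lext db (g N v) - ksign dg • Pd deg' db g N v := by
  show circ deg' dg (arity1 db) g N v
      - ksign (1 * dg) • circ deg' 1 g (arity1 db) N v = _
  rw [circ_arity1_left, circ_arity1_right, one_mul]

/-- post-composition with a basis map -/
noncomputable def hcomp (h : S → S →₀ k) (g : HomT k S) : HomT k S :=
  fun n v => lext h (g n v)

lemma Pd_hcomp (deg' : S → ℤ) (db h : S → S →₀ k) (g : HomT k S)
    (N : ℕ) (v : ℕ → S) :
    Pd deg' db (hcomp h g) N v = lext h (Pd deg' db g N v) := by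
  unfold Pd hcomp
  rw [lext_eq]
  rw [map_sum]
  refine Finset.sum_congr rfl fun i _ => ?_
  rw [map_zsmul]
  congr 1
  rw [Finsupp.sum, Finsupp.sum, map_sum]
  refine Finset.sum_congr rfl fun s _ => ?_
  rw [map_smul]

lemma Pd_ne_zero {deg' : S → ℤ} {db : S → S →₀ k} {g : HomT k S} {N : ℕ}
    {v : ℕ → S} {t : S} (hne : Pd deg' db g N v t ≠ 0) :
    ∃ i < N, ∃ s, db (v i) s ≠ 0 ∧
      g N (fun j => if j < i then v j else if j = i then s else v j) t ≠ 0 := by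
  rw [Pd, Finset.sum_apply'] at hne
  obtain ⟨i, hi, hne⟩ := Finset.exists_ne_zero_of_sum_ne_zero hne
  rw [Finsupp.smul_apply] at hne
  have hne2 : ((db (v i)).sum fun s c =>
      c • g N (fun j => if j < i then v j else if j = i then s else v j)) t ≠ 0 :=
    fun h0 => hne (by rw [h0, smul_zero])
  rw [Finsupp.sum, Finset.sum_apply'] at hne2
  obtain ⟨s, hs, hne3⟩ := Finset.exists_ne_zero_of_sum_ne_zero hne2
  exact ⟨i, Finset.mem_range.mp hi, s, Finsupp.mem_support_iff.mp hs,
    fun h0 => hne3 (by rw [Finsupp.smul_apply, h0, smul_zero])⟩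

lemma sum_update {f : S → ℤ} {v : ℕ → S} {i N : ℕ} (hiN : i < N) (s : S) :
    (∑ j ∈ Finset.range N, f (if j < i then v j else if j = i then s else v j))
      = (∑ j ∈ Finset.range N, f (v j)) + (f s - f (v i)) := by
  have key : ∀ j, f (if j < i then v j else if j = i then s else v j)
      = f (v j) + (if j = i then f s - f (v i) else 0) := by
    intro j
    by_cases hj : j = i
    · subst hj; simp
    · by_cases hj2 : j < i <;> simp [hj, hj2]
  simp only [key, Finset.sum_add_distrib]
  rw [Finset.sum_ite_eq' (Finset.range N)]
  simp [Finset.mem_range.mpr hiN]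

end AuxRes

/-- Let `(V, m', d)` be a resolution of an A∞-algebra, i.e. `V` is
a bigraded space (basis degrees `deg`, resolution degrees `rdeg ≥ 0`), `d` has
bidegree `(0,1)` and admits a contracting homotopy `h` onto `W = H⁰(V,d)`
(`hd + dh = 1 − ip`).  Then the cohomology of the ideal `L̄ = tL` (elements of
`Hom(T(V),V) ⊗ t k[[t]]`, encoded as power series `F : ℕ → HomT` with `F 0 = 0`)
with respect to `∂'' = [d,−]` is concentrated in resolution degree zero: every
`∂''`-closed element of resolution degree `q > 0` is a `∂''`-coboundary of an
element of resolution degree `q - 1`, and no nonzero element of resolution degree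
`0` is a `∂''`-coboundary of an element of `L̄` (of resolution degree `≥ 0`), so
that `H⁰_{∂''}(L̄) = ker ∂'' ∩ L̄^{•,0}`. -/
theorem resolution_cohomology_concentrated_in_degree_zero {k S : Type} [Field k]
    (deg rdeg : S → ℤ) (hr0 : ∀ s, 0 ≤ rdeg s)
    (db h ipb : S → (S →₀ k))
    (hdb : ∀ s t, (db s) t ≠ 0 → deg t = deg s ∧ rdeg t = rdeg s + 1)
    (hhb : ∀ s t, (h s) t ≠ 0 → deg t = deg s ∧ rdeg t = rdeg s - 1)
    (hip : ∀ s t, (ipb s) t ≠ 0 → rdeg s = 0 ∧ rdeg t = 0 ∧ deg t = deg s)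
    (hd2 : ∀ x, lext db (lext db x) = 0)
    (hsdr : ∀ x, lext h (lext db x) + lext db (lext h x) = x - lext ipb x)
    (hh2 : ∀ x, lext h (lext h x) = 0) :
    (∀ (q dF : ℤ), 0 < q →
      ∀ F : ℕ → HomT k S, F 0 = 0 →
        (∀ n, IsHomog (fun s => deg s + rdeg s) (F n) dF) →
        (∀ n, IsHomog rdeg (F n) q) →
        (∀ n, gbracket (fun s => deg s + rdeg s) 1 dF (arity1 db) (F n) = 0) →
        ∃ G : ℕ → HomT k S, G 0 = 0
          ∧ (∀ n, IsHomog (fun s => deg s + rdeg s) (G n) (dF - 1))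
          ∧ (∀ n, IsHomog rdeg (G n) (q - 1))
          ∧ ∀ n, gbracket (fun s => deg s + rdeg s) 1 (dF - 1) (arity1 db) (G n) = F n)
    ∧ (∀ (q dG : ℤ) (F G : ℕ → HomT k S), 0 ≤ q → F 0 = 0 → G 0 = 0 →
        (∀ n, IsHomog rdeg (F n) 0) →
        (∀ n, IsHomog rdeg (G n) q) →
        (∀ n, IsHomog (fun s => deg s + rdeg s) (G n) dG) →
        (∀ n, gbracket (fun s => deg s + rdeg s) 1 dG (arity1 db) (G n) = F n) →
        F = 0) := by

  constructor
  · intro q dF hq F hF0 hhomF hrhomF hclosed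
    refine ⟨fun n => AuxRes.hcomp h (F n), ?_, ?_, ?_, ?_⟩
    · funext N v
      show lext h (F 0 N v) = 0
      rw [hF0]
      exact AuxRes.lext_zero h
    · intro n N v t hne
      have hne' : lext h (F n N v) t ≠ 0 := hne
      obtain ⟨s, hFs, hhs⟩ := AuxRes.lext_ne_zero hne'
      have h1 : deg s + rdeg s
          = (∑ j ∈ Finset.range N, (deg (v j) + rdeg (v j))) + dF := hhomF n N v s hFs
      obtain ⟨he1, he2⟩ := hhb s t hhs
      show deg t + rdeg t = (∑ j ∈ Finset.range N, (deg (v j) + rdeg (v j))) + (dF - 1)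
      linarith
    · intro n N v t hne
      have hne' : lext h (F n N v) t ≠ 0 := hne
      obtain ⟨s, hFs, hhs⟩ := AuxRes.lext_ne_zero hne'
      have h1 : rdeg s = (∑ j ∈ Finset.range N, rdeg (v j)) + q := hrhomF n N v s hFs
      obtain ⟨he1, he2⟩ := hhb s t hhs
      show rdeg t = (∑ j ∈ Finset.range N, rdeg (v j)) + (q - 1)
      linarith
    · intro n
      funext N v
      rw [AuxRes.gbracket_arity1, AuxRes.Pd_hcomp]
      have hz : lext db (F n N v)
          - ksign dF • AuxRes.Pd (fun s => deg s + rdeg s) db (F n) N v = 0 := by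
        rw [← AuxRes.gbracket_arity1, hclosed n]
        rfl
      have h1 : lext db (F n N v)
          = ksign dF • AuxRes.Pd (fun s => deg s + rdeg s) db (F n) N v :=
        sub_eq_zero.mp hz
      have hP : AuxRes.Pd (fun s => deg s + rdeg s) db (F n) N v
          = ksign dF • lext db (F n N v) := by
        calc AuxRes.Pd (fun s => deg s + rdeg s) db (F n) N v
            = (1 : ℤ) • AuxRes.Pd (fun s => deg s + rdeg s) db (F n) N v :=
              (one_smul ℤ _).symm
          _ = (ksign dF * ksign dF) • AuxRes.Pd (fun s => deg s + rdeg s) db (F n) N v := by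
              rw [AuxRes.ksign_mul_self]
          _ = ksign dF • (ksign dF • AuxRes.Pd (fun s => deg s + rdeg s) db (F n) N v) := by
              rw [smul_smul]
          _ = ksign dF • lext db (F n N v) := by rw [← h1]
      rw [hP, AuxRes.lext_zsmul, smul_smul, AuxRes.ksign_sub_one_mul, neg_smul, one_smul,
        sub_neg_eq_add]
      have hip0 : lext ipb (F n N v) = 0 := by
        ext t
        simp only [Finsupp.coe_zero, Pi.zero_apply]
        by_contra hne
        obtain ⟨s, hFs, hips⟩ := AuxRes.lext_ne_zero hne
        have h1 : rdeg s = (∑ j ∈ Finset.range N, rdeg (v j)) + q := hrhomF n N v s hFs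
        have h2 := (hip s t hips).1
        have h3 : (0 : ℤ) ≤ ∑ j ∈ Finset.range N, rdeg (v j) :=
          Finset.sum_nonneg fun j _ => hr0 (v j)
        linarith
      have hkey := hsdr (F n N v)
      rw [hip0, sub_zero] at hkey
      show lext db (lext h (F n N v)) + lext h (lext db (F n N v)) = F n N v
      rw [add_comm]
      exact hkey
  · intro q dG F G hq hF0 hG0 hFr hGr hGd hbr
    funext n N v
    show F n N v = 0
    ext t
    simp only [Finsupp.coe_zero, Pi.zero_apply]
    by_contra hne
    have h0 : rdeg t = (∑ j ∈ Finset.range N, rdeg (v j)) + 0 := hFr n N v t hne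
    have heq : F n N v = lext db (G n N v)
        - ksign dG • AuxRes.Pd (fun s => deg s + rdeg s) db (G n) N v := by
      rw [← hbr n, AuxRes.gbracket_arity1]
    have hcs : lext db (G n N v) t ≠ 0
        ∨ (AuxRes.Pd (fun s => deg s + rdeg s) db (G n) N v) t ≠ 0 := by
      by_contra hc
      push_neg at hc
      apply hne
      rw [heq, Finsupp.sub_apply, Finsupp.smul_apply, hc.1, hc.2, smul_zero, sub_zero]
    rcases hcs with hA | hB
    · obtain ⟨s, hGs, hdbs⟩ := AuxRes.lext_ne_zero hA
      have h1 : rdeg s = (∑ j ∈ Finset.range N, rdeg (v j)) + q := hGr n N v s hGs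
      have h2 := (hdb s t hdbs).2
      linarith
    · obtain ⟨i, hiN, s, hdbs, hgne⟩ := AuxRes.Pd_ne_zero hB
      have h2 := (hdb (v i) s hdbs).2
      have h1 : rdeg t = (∑ j ∈ Finset.range N,
          rdeg (if j < i then v j else if j = i then s else v j)) + q := hGr n N _ t hgne
      rw [AuxRes.sum_update hiN] at h1
      linarith
end

section
/- Let ∂ be the differential of a DGLA, μ a degree-1 element, and suppose elements Γ (degree 0), Λ (degree 1) satisfy the master equations ∂_μΓ = tΛ − Nμ, NΛ = [Γ,Λ], with μ(0)=0, Λ(0)=λ, Γ ∈ tL, where ∂_μ = ∂+[μ,−] and N = t d/dt. If ∂λ = 0 and [λ,λ] = 0, then μ satisfies the Maurer-Cartan equation ∂μ + ½[μ,μ] = 0. -/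
namespace MCaux

lemma tripleL {A : Type*} [AddCommMonoid A] (F : ℕ → ℕ → ℕ → A) (n : ℕ) :
    ∑ i ∈ Finset.range (n+1), ∑ j ∈ Finset.range (i+1), F j (i-j) (n-i)
      = ∑ a ∈ Finset.range (n+1), ∑ b ∈ Finset.range (n-a+1), F a b (n-a-b) := by
  rw [Finset.sum_sigma', Finset.sum_sigma']
  refine Finset.sum_nbij' (fun p : Σ _ : ℕ, ℕ => (⟨p.2, p.1 - p.2⟩ : Σ _ : ℕ, ℕ))
    (fun p : Σ _ : ℕ, ℕ => (⟨p.1 + p.2, p.1⟩ : Σ _ : ℕ, ℕ)) ?_ ?_ ?_ ?_ ?_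
  · rintro ⟨a, b⟩ h
    simp only [Finset.mem_sigma, Finset.mem_range] at h
    refine Finset.mem_sigma.mpr ⟨Finset.mem_range.mpr ?_, Finset.mem_range.mpr ?_⟩ <;>
      dsimp only <;> omega
  · rintro ⟨a, b⟩ h
    simp only [Finset.mem_sigma, Finset.mem_range] at h
    refine Finset.mem_sigma.mpr ⟨Finset.mem_range.mpr ?_, Finset.mem_range.mpr ?_⟩ <;>
      dsimp only <;> omega
  · rintro ⟨a, b⟩ h
    simp only [Finset.mem_sigma, Finset.mem_range] at h
    have e : b + (a - b) = a := by omega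
    simp [e]
  · rintro ⟨a, b⟩ h
    simp only [Finset.mem_sigma, Finset.mem_range] at h
    have e : a + b - a = b := by omega
    simp [e]
  · rintro ⟨a, b⟩ h
    simp only [Finset.mem_sigma, Finset.mem_range] at h
    have e : n - b - (a - b) = n - a := by omega
    simp only
    rw [e]

variable {k M : Type} [Field k] [AddCommGroup M] [Module k M]
variable (br : M →ₗ[k] M →ₗ[k] M)

def cv (f g : ℕ → M) : ℕ → M :=
  fun n => ∑ i ∈ Finset.range (n + 1), br (f i) (g (n - i))

lemma cv_congr_left {f f' : ℕ → M} (g : ℕ → M) (h : ∀ m, f m = f' m) (n : ℕ) :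
    cv br f g n = cv br f' g n := by
  unfold cv; exact Finset.sum_congr rfl fun i _ => by rw [h]

lemma cv_congr_right (f : ℕ → M) {g g' : ℕ → M} (h : ∀ m, g m = g' m) (n : ℕ) :
    cv br f g n = cv br f g' n := by
  unfold cv; exact Finset.sum_congr rfl fun i _ => by rw [h]

lemma cv_add_left (f f' g : ℕ → M) (n : ℕ) :
    cv br (fun m => f m + f' m) g n = cv br f g n + cv br f' g n := by
  simp [cv, map_add, LinearMap.add_apply, Finset.sum_add_distrib]

lemma cv_sub_left (f f' g : ℕ → M) (n : ℕ) :
    cv br (fun m => f m - f' m) g n = cv br f g n - cv br f' g n := by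
  simp [cv, map_sub, LinearMap.sub_apply, Finset.sum_sub_distrib]

lemma cv_neg_left (f g : ℕ → M) (n : ℕ) :
    cv br (fun m => - f m) g n = - cv br f g n := by
  simp [cv, map_neg, LinearMap.neg_apply, Finset.sum_neg_distrib]

lemma cv_smul_left (c : k) (f g : ℕ → M) (n : ℕ) :
    cv br (fun m => c • f m) g n = c • cv br f g n := by
  simp [cv, map_smul, LinearMap.smul_apply, Finset.smul_sum]

lemma cv_add_right (f g g' : ℕ → M) (n : ℕ) :
    cv br f (fun m => g m + g' m) n = cv br f g n + cv br f g' n := by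
  simp [cv, map_add, Finset.sum_add_distrib]

lemma cv_sub_right (f g g' : ℕ → M) (n : ℕ) :
    cv br f (fun m => g m - g' m) n = cv br f g n - cv br f g' n := by
  simp [cv, map_sub, Finset.sum_sub_distrib]

lemma cv_N (f g : ℕ → M) (n : ℕ) :
    (n : k) • cv br f g n
      = cv br (fun m => (m : k) • f m) g n + cv br f (fun m => (m : k) • g m) n := by
  unfold cv
  rw [Finset.smul_sum, ← Finset.sum_add_distrib]
  refine Finset.sum_congr rfl fun i hi => ?_
  rw [Finset.mem_range] at hi
  rw [map_smul, LinearMap.smul_apply, map_smul, ← add_smul]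
  congr 1
  rw [← Nat.cast_add]
  congr 1
  omega

lemma cv_symm (f g : ℕ → M) (H : ∀ i j, br (f i) (g j) = br (g j) (f i)) (n : ℕ) :
    cv br f g n = cv br g f n := by
  unfold cv
  rw [← Finset.sum_range_reflect]
  refine Finset.sum_congr rfl fun i hi => ?_
  rw [Finset.mem_range] at hi
  have h1 : n + 1 - 1 - i = n - i := by omega
  have h2 : n - (n - i) = i := by omega
  rw [h1, h2, H]

lemma cv_leib (Dl : M →ₗ[k] M) (f g : ℕ → M) (s : ℤ)
    (H : ∀ i j, Dl (br (f i) (g j)) = br (Dl (f i)) (g j) + s • br (f i) (Dl (g j)))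
    (n : ℕ) :
    Dl (cv br f g n)
      = cv br (fun m => Dl (f m)) g n + s • cv br f (fun m => Dl (g m)) n := by
  unfold cv
  rw [map_sum, Finset.smul_sum, ← Finset.sum_add_distrib]
  exact Finset.sum_congr rfl fun i _ => H i (n - i)

lemma cv_jac (f g h : ℕ → M) (s : ℤ)
    (Hj : ∀ a b c, br (br (f a) (g b)) (h c)
        = br (f a) (br (g b) (h c)) + s • br (g b) (br (f a) (h c))) (n : ℕ) :
    cv br (cv br f g) h n
      = cv br f (cv br g h) n + s • cv br g (cv br f h) n := by
  unfold cv
  simp only [map_sum, LinearMap.sum_apply, Finset.smul_sum, Hj, Finset.sum_add_distrib]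
  congr 1
  · exact tripleL (fun a b c => br (f a) (br (g b) (h c))) n
  · rw [← tripleL (fun a b c => s • br (g a) (br (f b) (h c))) n]
    refine Finset.sum_congr rfl fun i hi => ?_
    rw [← Finset.sum_range_reflect]
    refine Finset.sum_congr rfl fun j hj => ?_
    rw [Finset.mem_range] at hj
    have h1 : i + 1 - 1 - j = i - j := by omega
    have h2 : i - (i - j) = j := by omega
    rw [h1, h2]

-- shift lemmas
lemma shift_cv_left (f g : ℕ → M) (n : ℕ) :
    cv br (fun m => if m = 0 then 0 else f (m-1)) g n
      = if n = 0 then 0 else cv br f g (n-1) := by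
  cases n with
  | zero => simp [cv]
  | succ m =>
    simp only [Nat.succ_ne_zero, if_false, Nat.add_sub_cancel]
    unfold cv
    rw [Finset.sum_range_succ']
    simp [Nat.succ_sub_succ]

lemma shift_cv_right (f g : ℕ → M) (n : ℕ) :
    cv br f (fun m => if m = 0 then 0 else g (m-1)) n
      = if n = 0 then 0 else cv br f g (n-1) := by
  cases n with
  | zero =>
    rw [if_pos rfl]
    unfold cv
    rw [Finset.sum_range_one]
    simp
  | succ m =>
    simp only [Nat.succ_ne_zero, if_false, Nat.add_sub_cancel]
    unfold cv
    rw [Finset.sum_range_succ, Nat.sub_self,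
      show ((fun m' => if m' = 0 then (0:M) else g (m'-1)) 0) = 0 from rfl,
      map_zero, add_zero]
    refine Finset.sum_congr rfl fun i hi => ?_
    rw [Finset.mem_range] at hi
    have h1 : m + 1 - i ≠ 0 := by omega
    dsimp only
    rw [if_neg h1]
    congr 2
    omega


lemma cv_antisymm (f g : ℕ → M) (H : ∀ i j, br (f i) (g j) = - br (g j) (f i)) (n : ℕ) :
    cv br f g n = - cv br g f n := by
  unfold cv
  rw [← Finset.sum_neg_distrib, ← Finset.sum_range_reflect]
  refine Finset.sum_congr rfl fun i hi => ?_
  rw [Finset.mem_range] at hi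
  have h1 : n + 1 - 1 - i = n - i := by omega
  have h2 : n - (n - i) = i := by omega
  rw [h1, h2, H]

lemma cv_vanish (f g : ℕ → M) (n : ℕ) (h0 : f 0 = 0) (hg : ∀ j, j < n → g j = 0) :
    cv br f g n = 0 := by
  unfold cv
  refine Finset.sum_eq_zero fun i hi => ?_
  rw [Finset.mem_range] at hi
  rcases Nat.eq_zero_or_pos i with h | h
  · subst h; rw [h0]; simp
  · rw [hg (n - i) (by omega)]; simp

lemma cv_vanish' (f g : ℕ → M) (n : ℕ) (hf : ∀ j, j < n → f j = 0) (hg0 : g 0 = 0) :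
    cv br f g n = 0 := by
  unfold cv
  refine Finset.sum_eq_zero fun i hi => ?_
  rw [Finset.mem_range] at hi
  rcases Nat.lt_or_ge i n with h | h
  · rw [hf i h]; simp
  · have : n - i = 0 := by omega
    rw [this, hg0]; simp

end MCaux

open MCaux

/-- Let `(L, ∂, [−,−])` be a DGLA over `k[[t]]` (encoded here as formal
power series `ℕ → M` with coefficients in a graded Lie algebra `M` over a field `k` of
characteristic zero, with Cauchy-product bracket and coefficientwise differential `D`).
Suppose the degree-0 element `Γ ∈ tL`, the degree-1 elements `Λ` and `μ` (with
`μ(0) = 0`, `Λ(0) = λ`) satisfy the master equations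
`∂_μ Γ = tΛ − Nμ` and `NΛ = [Γ,Λ]`, where `∂_μ = ∂ + [μ,−]` and `N = t d/dt`.
If `∂λ = 0` and `[λ,λ] = 0`, then `μ` satisfies the Maurer--Cartan equation
`∂μ + ½[μ,μ] = 0`. -/
theorem master_equations_imply_MC {k M : Type} [Field k] [CharZero k]
    [AddCommGroup M] [Module k M]
    (deg : ℤ → Submodule k M) (hinternal : DirectSum.IsInternal deg)
    (br : M →ₗ[k] M →ₗ[k] M) (D : M →ₗ[k] M)
    (hbrdeg : ∀ (i j : ℤ) (x y : M), x ∈ deg i → y ∈ deg j → br x y ∈ deg (i + j))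
    (hskew : ∀ (i j : ℤ) (x y : M), x ∈ deg i → y ∈ deg j →
      br x y = -(ksign (i * j) • br y x))
    (hjac : ∀ (i j : ℤ) (x y z : M), x ∈ deg i → y ∈ deg j →
      br (br x y) z = br x (br y z) - ksign (i * j) • br y (br x z))
    (hDdeg : ∀ (i : ℤ) (x : M), x ∈ deg i → D x ∈ deg (i + 1))
    (hD2 : ∀ x, D (D x) = 0)
    (hleib : ∀ (i : ℤ) (x y : M), x ∈ deg i →
      D (br x y) = br (D x) y + ksign i • br x (D y))
    (μ Γ Λ : ℕ → M) (lam : M)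
    (hΓdeg : ∀ n, Γ n ∈ deg 0) (hΛdeg : ∀ n, Λ n ∈ deg 1) (hμdeg : ∀ n, μ n ∈ deg 1)
    (hlamdeg : lam ∈ deg 1)
    (hΓ0 : Γ 0 = 0) (hμ0 : μ 0 = 0) (hΛ0 : Λ 0 = lam)
    (hME1 : ∀ n : ℕ, D (Γ n) + ∑ i ∈ Finset.range (n + 1), br (μ i) (Γ (n - i))
        = (if n = 0 then 0 else Λ (n - 1)) - (n : ℤ) • μ n)
    (hME2 : ∀ n : ℕ, (n : ℤ) • Λ n = ∑ i ∈ Finset.range (n + 1), br (Γ i) (Λ (n - i)))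
    (hlam_closed : D lam = 0) (hlam_sq : br lam lam = 0) :
    ∀ n : ℕ, D (μ n) + (2 : k)⁻¹ • ∑ i ∈ Finset.range (n + 1), br (μ i) (μ (n - i)) = 0 := by
  classical
  have two_ne : (2:k) ≠ 0 := by norm_num
  have half2 : ∀ x : M, (2:k)⁻¹ • (x + x) = x := by
    intro x
    rw [← two_smul k x, smul_smul, inv_mul_cancel₀ two_ne, one_smul]
  have cast_smul : ∀ (m : ℕ) (x : M), (m:ℤ) • x = (m:k) • x := by
    intro m x; simp only [Nat.cast_smul_eq_nsmul]
  -- degree-specialized bracket identities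
  have sym11 : ∀ x y : M, x ∈ deg 1 → y ∈ deg 1 → br x y = br y x := by
    intro x y hx hy
    rw [hskew 1 1 x y hx hy, show ksign (1*1) = -1 from by decide]
    simp
  have skew10 : ∀ x y : M, x ∈ deg 1 → y ∈ deg 0 → br x y = - br y x := by
    intro x y hx hy
    rw [hskew 1 0 x y hx hy, show ksign (1*0) = 1 from by decide]
    simp
  have jac01 : ∀ x y z : M, x ∈ deg 0 → y ∈ deg 1 →
      br (br x y) z = br x (br y z) + (-1:ℤ) • br y (br x z) := by
    intro x y z hx hy
    rw [hjac 0 1 x y z hx hy, show ksign (0*1) = 1 from by decide]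
    simp [sub_eq_add_neg]
  have jac11 : ∀ x y z : M, x ∈ deg 1 → y ∈ deg 1 →
      br (br x y) z = br x (br y z) + (1:ℤ) • br y (br x z) := by
    intro x y z hx hy
    rw [hjac 1 1 x y z hx hy, show ksign (1*1) = -1 from by decide]
    simp [sub_eq_add_neg]
  have leib0 : ∀ x y : M, x ∈ deg 0 →
      D (br x y) = br (D x) y + (1:ℤ) • br x (D y) := by
    intro x y hx
    rw [hleib 0 x y hx, show ksign 0 = 1 from by decide]
  have leib1 : ∀ x y : M, x ∈ deg 1 →
      D (br x y) = br (D x) y + (-1:ℤ) • br x (D y) := by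
    intro x y hx
    rw [hleib 1 x y hx, show ksign 1 = -1 from by decide]
  -- master equations, reformulated
  have hME2' : ∀ m : ℕ, (m:k) • Λ m = cv br Γ Λ m := by
    intro m
    rw [← cast_smul]
    exact hME2 m
  have hME1' : ∀ m : ℕ, D (Γ m)
      = (if m = 0 then 0 else Λ (m-1)) - (m:k) • μ m - cv br μ Γ m := by
    intro m
    have h := hME1 m
    rw [cast_smul] at h
    exact eq_sub_of_add_eq h
  ---------------------------------------------------------------- S := Λ⋆Λ
  have keyS : ∀ n : ℕ, (n:k) • cv br Λ Λ n = cv br Γ (fun j => cv br Λ Λ j) n := by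
    intro n
    have s2 : cv br (fun m => (m:k) • Λ m) Λ n = cv br (fun m => cv br Γ Λ m) Λ n :=
      cv_congr_left br Λ hME2' n
    have s3 : cv br Λ (fun m => (m:k) • Λ m) n = cv br Λ (fun m => cv br Γ Λ m) n :=
      cv_congr_right br Λ hME2' n
    have s4 : cv br (fun m => cv br Γ Λ m) Λ n
        = cv br Γ (fun m => cv br Λ Λ m) n + (-1:ℤ) • cv br Λ (fun m => cv br Γ Λ m) n :=
      cv_jac br Γ Λ Λ (-1) (fun a b c => jac01 (Γ a) (Λ b) (Λ c) (hΓdeg a) (hΛdeg b)) n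
    rw [cv_N br Λ Λ n, s2, s3, s4, neg_one_zsmul]
    abel
  have claimS : ∀ n : ℕ, cv br Λ Λ n = 0 := by
    intro n
    induction n using Nat.strong_induction_on with
    | _ n ih =>
      rcases n with _ | m
      · have h0 : cv br Λ Λ 0 = br (Λ 0) (Λ 0) := by simp [MCaux.cv]
        rw [h0, hΛ0, hlam_sq]
      · have h := keyS (m+1)
        have hz : cv br Γ (fun j => cv br Λ Λ j) (m+1) = 0 :=
          cv_vanish br Γ _ (m+1) hΓ0 (fun j hj => ih j hj)
        rw [hz] at h
        have hncast : ((m+1 : ℕ) : k) ≠ 0 := Nat.cast_ne_zero.mpr (by omega)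
        exact (smul_eq_zero.mp h).resolve_left hncast
  ---------------------------------------------------------------- T := DΛ + μ⋆Λ
  have keyT : ∀ m : ℕ, ((m+1 : ℕ) : k) • (D (Λ (m+1)) + cv br μ Λ (m+1))
      = cv br Λ Λ m + cv br Γ (fun j => D (Λ j) + cv br μ Λ j) (m+1) := by
    intro m
    set n := m + 1 with hn
    have a2 : cv br μ (fun j => (j:k) • Λ j) n = cv br μ (fun j => cv br Γ Λ j) n :=
      cv_congr_right br μ hME2' n
    have a3 : (n:k) • D (Λ n) = D (cv br Γ Λ n) := by
      rw [← map_smul, hME2' n]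
    have a4 : D (cv br Γ Λ n)
        = cv br (fun j => D (Γ j)) Λ n + (1:ℤ) • cv br Γ (fun j => D (Λ j)) n :=
      cv_leib br D Γ Λ 1 (fun i j => leib0 (Γ i) (Λ j) (hΓdeg i)) n
    have a5 : cv br (fun j => D (Γ j)) Λ n
        = cv br (fun j => (if j = 0 then 0 else Λ (j-1)) - (j:k) • μ j - cv br μ Γ j) Λ n :=
      cv_congr_left br Λ hME1' n
    have a6 : cv br (fun j => (if j = 0 then 0 else Λ (j-1)) - (j:k) • μ j - cv br μ Γ j) Λ n
        = cv br (fun j => (if j = 0 then 0 else Λ (j-1)) - (j:k) • μ j) Λ n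
          - cv br (fun j => cv br μ Γ j) Λ n :=
      cv_sub_left br _ _ Λ n
    have a7 : cv br (fun j => (if j = 0 then 0 else Λ (j-1)) - (j:k) • μ j) Λ n
        = cv br (fun j => if j = 0 then 0 else Λ (j-1)) Λ n
          - cv br (fun j => (j:k) • μ j) Λ n :=
      cv_sub_left br _ _ Λ n
    have a8 : cv br (fun j => if j = 0 then 0 else Λ (j-1)) Λ n = cv br Λ Λ m := by
      rw [shift_cv_left br Λ Λ n, if_neg (show ¬ (n = 0) by omega), hn, Nat.add_sub_cancel]
    have hswap : ∀ j, cv br μ Γ j = - cv br Γ μ j := fun j =>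
      cv_antisymm br μ Γ (fun a b => skew10 (μ a) (Γ b) (hμdeg a) (hΓdeg b)) j
    have a9 : cv br (fun j => cv br μ Γ j) Λ n = cv br (fun j => - cv br Γ μ j) Λ n :=
      cv_congr_left br Λ hswap n
    have a10 : cv br (fun j => - cv br Γ μ j) Λ n = - cv br (fun j => cv br Γ μ j) Λ n :=
      cv_neg_left br _ Λ n
    have a11 : cv br (fun j => cv br Γ μ j) Λ n
        = cv br Γ (fun j => cv br μ Λ j) n + (-1:ℤ) • cv br μ (fun j => cv br Γ Λ j) n :=
      cv_jac br Γ μ Λ (-1) (fun a b c => jac01 (Γ a) (μ b) (Λ c) (hΓdeg a) (hμdeg b)) n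
    have a13 : cv br Γ (fun j => D (Λ j) + cv br μ Λ j) n
        = cv br Γ (fun j => D (Λ j)) n + cv br Γ (fun j => cv br μ Λ j) n :=
      cv_add_right br Γ _ _ n
    rw [smul_add, a3, a4, a5, a6, a7, a8, a9, a10, a11, cv_N br μ Λ n, a2, a13,
      one_zsmul, neg_one_zsmul]
    abel
  have claimT : ∀ n : ℕ, D (Λ n) + cv br μ Λ n = 0 := by
    intro n
    induction n using Nat.strong_induction_on with
    | _ n ih =>
      rcases n with _ | m
      · have h0 : cv br μ Λ 0 = 0 := by simp [MCaux.cv, hμ0]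
        rw [h0, hΛ0, hlam_closed, add_zero]
      · have h := keyT m
        have hz : cv br Γ (fun j => D (Λ j) + cv br μ Λ j) (m+1) = 0 :=
          cv_vanish br Γ _ (m+1) hΓ0 (fun j hj => ih j hj)
        rw [hz, add_zero, claimS m] at h
        have hncast : ((m+1 : ℕ) : k) ≠ 0 := Nat.cast_ne_zero.mpr (by omega)
        exact (smul_eq_zero.mp h).resolve_left hncast
  ---------------------------------------------------------------- R := Dμ + ½ μ⋆μ
  have keyR : ∀ m : ℕ, ((m+1 : ℕ) : k) • (D (μ (m+1)) + (2:k)⁻¹ • cv br μ μ (m+1))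
      = (D (Λ m) + cv br μ Λ m)
        - cv br (fun j => D (μ j) + (2:k)⁻¹ • cv br μ μ j) Γ (m+1) := by
    intro m
    set n := m + 1 with hn
    have b4 : ∀ j : ℕ, (j:k) • μ j
        = (if j = 0 then 0 else Λ (j-1)) - (D (Γ j) + cv br μ Γ j) := by
      intro j; rw [hME1' j]; abel
    have b1 : (n:k) • cv br μ μ n
        = cv br (fun j => (j:k) • μ j) μ n + cv br μ (fun j => (j:k) • μ j) n :=
      cv_N br μ μ n
    have b2 : cv br (fun j => (j:k) • μ j) μ n = cv br μ (fun j => (j:k) • μ j) n :=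
      cv_symm br _ μ
        (fun i j => sym11 _ _ (Submodule.smul_mem _ _ (hμdeg i)) (hμdeg j)) n
    have b3 : (2:k)⁻¹ • ((n:k) • cv br μ μ n) = cv br μ (fun j => (j:k) • μ j) n := by
      rw [b1, b2, half2]
    have b5 : cv br μ (fun j => (j:k) • μ j) n
        = cv br μ (fun j => (if j = 0 then 0 else Λ (j-1)) - (D (Γ j) + cv br μ Γ j)) n :=
      cv_congr_right br μ b4 n
    have b6 : cv br μ (fun j => (if j = 0 then 0 else Λ (j-1)) - (D (Γ j) + cv br μ Γ j)) n
        = cv br μ (fun j => if j = 0 then 0 else Λ (j-1)) n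
          - cv br μ (fun j => D (Γ j) + cv br μ Γ j) n :=
      cv_sub_right br μ _ _ n
    have b7 : cv br μ (fun j => if j = 0 then 0 else Λ (j-1)) n = cv br μ Λ m := by
      rw [shift_cv_right br μ Λ n, if_neg (show ¬ (n = 0) by omega), hn, Nat.add_sub_cancel]
    have b8 : cv br μ (fun j => D (Γ j) + cv br μ Γ j) n
        = cv br μ (fun j => D (Γ j)) n + cv br μ (fun j => cv br μ Γ j) n :=
      cv_add_right br μ _ _ n
    have b9 : (n:k) • D (μ n)
        = D ((if n = 0 then 0 else Λ (n-1)) - (D (Γ n) + cv br μ Γ n)) := by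
      rw [← map_smul, b4 n]
    have b10 : D ((if n = 0 then 0 else Λ (n-1)) - (D (Γ n) + cv br μ Γ n))
        = D (Λ m) - D (cv br μ Γ n) := by
      rw [map_sub, map_add, hD2, zero_add, if_neg (show ¬ (n = 0) by omega), hn,
        Nat.add_sub_cancel]
    have b11 : D (cv br μ Γ n)
        = cv br (fun j => D (μ j)) Γ n + (-1:ℤ) • cv br μ (fun j => D (Γ j)) n :=
      cv_leib br D μ Γ (-1) (fun i j => leib1 (μ i) (Γ j) (hμdeg i)) n
    have c1 : cv br (fun j => cv br μ μ j) Γ n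
        = cv br μ (fun j => cv br μ Γ j) n + (1:ℤ) • cv br μ (fun j => cv br μ Γ j) n :=
      cv_jac br μ μ Γ 1 (fun a b c => jac11 (μ a) (μ b) (Γ c) (hμdeg a) (hμdeg b)) n
    have b12 : cv br μ (fun j => cv br μ Γ j) n
        = (2:k)⁻¹ • cv br (fun j => cv br μ μ j) Γ n := by
      rw [c1, one_zsmul, half2]
    have b13 : cv br (fun j => D (μ j) + (2:k)⁻¹ • cv br μ μ j) Γ n
        = cv br (fun j => D (μ j)) Γ n + (2:k)⁻¹ • cv br (fun j => cv br μ μ j) Γ n := by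
      rw [cv_add_left br (fun j => D (μ j)) (fun j => (2:k)⁻¹ • cv br μ μ j) Γ n,
        cv_smul_left br ((2:k)⁻¹) (fun j => cv br μ μ j) Γ n]
    rw [smul_add, b9, b10, b11, smul_comm ((n:ℕ):k) ((2:k)⁻¹) (cv br μ μ n), b3, b5, b6,
      b7, b8, b12, b13, neg_one_zsmul]
    abel
  have final : ∀ n : ℕ, D (μ n) + (2:k)⁻¹ • cv br μ μ n = 0 := by
    intro n
    induction n using Nat.strong_induction_on with
    | _ n ih =>
      rcases n with _ | m
      · have h0 : cv br μ μ 0 = 0 := by simp [MCaux.cv, hμ0]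
        rw [h0, hμ0, map_zero, smul_zero, add_zero]
      · have h := keyR m
        have hz : cv br (fun j => D (μ j) + (2:k)⁻¹ • cv br μ μ j) Γ (m+1) = 0 :=
          cv_vanish' br _ Γ (m+1) (fun j hj => ih j hj) hΓ0
        rw [hz, claimT m, sub_zero] at h
        have hncast : ((m+1 : ℕ) : k) ≠ 0 := Nat.cast_ne_zero.mpr (by omega)
        exact (smul_eq_zero.mp h).resolve_left hncast
  intro n
  exact final n
end

section
/- (Basic Perturbation Lemma) Given SDR data (p, i, h) between complexes (V,d_V) and (W,d_W) with pi = 1_W, d_V h + h d_V = ip − 1_V, hi = 0, ph = 0, h² = 0, and a perturbation δ with (d_V+δ)² = 0 such that 1 − δh is invertible, the maps p' = p + p(1−δh)^{-1}δh, i' = i + h(1−δh)^{-1}δi, h' = h + h(1−δh)^{-1}δh, d'_W = d_W + p(1−δh)^{-1}δi define new SDR data: (d'_W)² = 0, p'i' = 1_W, (d_V+δ)h' + h'(d_V+δ) = i'p' − 1_V, p' and i' are chain maps, and h'i' = 0, p'h' = 0, (h')² = 0. -/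
/-- **Basic Perturbation Lemma.** Given SDR data `(p, i, h)` between
complexes `(V, d_V)` and `(W, d_W)` with `p i = 1_W`, `d_V h + h d_V = i p − 1_V`,
`h i = 0`, `p h = 0`, `h² = 0`, and a perturbation `δ` with `(d_V + δ)² = 0` such that
`1 − δh` is invertible (with inverse `A`), the maps
`p' = p + p A δ h`, `i' = i + h A δ i`, `h' = h + h A δ h`, `d'_W = d_W + p A δ i`
define new SDR data. -/
theorem basic_perturbation_lemma {k V W : Type} [Field k]
    [AddCommGroup V] [Module k V] [AddCommGroup W] [Module k W]
    (dV : Module.End k V) (dW : Module.End k W)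
    (p : V →ₗ[k] W) (i : W →ₗ[k] V) (h : Module.End k V) (δ : Module.End k V)
    (hdV : dV * dV = 0) (hdW : dW * dW = 0)
    (hpchain : dW ∘ₗ p = p ∘ₗ dV) (hichain : dV ∘ₗ i = i ∘ₗ dW)
    (hpi : p ∘ₗ i = LinearMap.id)
    (hhomotopy : dV * h + h * dV = (i ∘ₗ p : Module.End k V) - 1)
    (hhi : h ∘ₗ i = 0) (hph : p ∘ₗ h = 0) (hh2 : h * h = 0)
    (hpert : (dV + δ) * (dV + δ) = 0)
    (A : Module.End k V) (hA1 : (1 - δ * h) * A = 1) (hA2 : A * (1 - δ * h) = 1) :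
    letI p' : V →ₗ[k] W := p + p ∘ₗ (A * δ * h)
    letI i' : W →ₗ[k] V := i + (h * A * δ) ∘ₗ i
    letI h' : Module.End k V := h + h * A * δ * h
    letI dW' : Module.End k W := dW + p ∘ₗ ((A * δ) ∘ₗ i)
    dW' * dW' = 0
    ∧ p' ∘ₗ i' = LinearMap.id
    ∧ (dV + δ) * h' + h' * (dV + δ) = (i' ∘ₗ p' : Module.End k V) - 1
    ∧ dW' ∘ₗ p' = p' ∘ₗ (dV + δ)
    ∧ (dV + δ) ∘ₗ i' = i' ∘ₗ dW'
    ∧ h' ∘ₗ i' = 0 ∧ p' ∘ₗ h' = 0 ∧ h' * h' = 0 := by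
  -- zero-forms of hypotheses
  have z2 : dV * h + h * dV - ((i ∘ₗ p : Module.End k V) - 1) = 0 :=
    sub_eq_zero.mpr hhomotopy
  have z5 : (1 - δ * h) * A - 1 = 0 := sub_eq_zero.mpr hA1
  have z6 : A * (1 - δ * h) - 1 = 0 := sub_eq_zero.mpr hA2
  have hdWc : dW ∘ₗ dW = 0 := by rw [← Module.End.mul_eq_comp]; exact hdW
  have hhc : h ∘ₗ h = 0 := by rw [← Module.End.mul_eq_comp]; exact hh2
  have hh0W : ∀ (x : W →ₗ[k] V), h ∘ₗ (h ∘ₗ x) = 0 := fun x => by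
    rw [← LinearMap.comp_assoc, hhc, LinearMap.zero_comp]
  have hh0V : ∀ (x : V →ₗ[k] V), h ∘ₗ (h ∘ₗ x) = 0 := fun x => by
    rw [← LinearMap.comp_assoc, hhc, LinearMap.zero_comp]
  -- key End identity (★): A(d+δ) = (d+δ)A + Aδ(ip)A - δA
  have K5 : A * (dV + δ) = (dV + δ) * A + A * δ * ((i ∘ₗ p : Module.End k V) * A) - δ * A := by
    have hc : A * (dV + δ) - ((dV + δ) * A + A * δ * ((i ∘ₗ p : Module.End k V) * A) - δ * A)
        = A * (δ * (dV * h + h * dV - ((i ∘ₗ p : Module.End k V) - 1))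
            - ((dV + δ) * (dV + δ)) * h + (dV * dV) * h) * A
          - A * ((dV + δ) * ((1 - δ * h) * A - 1))
          + (A * (1 - δ * h) - 1) * ((dV + δ) * A)
          - (A * (1 - δ * h) - 1) * (δ * A) := by noncomm_ring
    rw [z2, hpert, hdV, z5, z6] at hc
    simp only [mul_zero, zero_mul, sub_zero, add_zero, zero_add, neg_zero, zero_sub, sub_self] at hc
    exact sub_eq_zero.mp hc
  have zK5 : A * (dV + δ) - ((dV + δ) * A + A * δ * ((i ∘ₗ p : Module.End k V) * A) - δ * A) = 0 :=
    sub_eq_zero.mpr K5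
  -- K6 : dΣ + Σd + Σ(ip)Σ = 0 with Σ = Aδ
  have K6 : dV * (A * δ) + ((A * δ) * dV + (A * δ) * ((i ∘ₗ p : Module.End k V) * (A * δ))) = 0 := by
    have hc : dV * (A * δ) + ((A * δ) * dV + (A * δ) * ((i ∘ₗ p : Module.End k V) * (A * δ)))
        = -((A * (dV + δ) - ((dV + δ) * A + A * δ * ((i ∘ₗ p : Module.End k V) * A) - δ * A)) * δ)
          + A * ((dV + δ) * (dV + δ)) - A * (dV * dV) := by noncomm_ring
    rw [zK5, hpert, hdV] at hc
    simp only [mul_zero, zero_mul, sub_zero, add_zero, zero_add, neg_zero, zero_sub, sub_self] at hc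
    exact hc
  -- KH : (d+δ)(hA) + (hA)(d+δ) = (1+hAδ)((ip)A) - 1
  have KH : (dV + δ) * (h * A) + (h * A) * (dV + δ)
      = (1 + h * A * δ) * ((i ∘ₗ p : Module.End k V) * A) - 1 := by
    have hc : (dV + δ) * (h * A) + (h * A) * (dV + δ)
        - ((1 + h * A * δ) * ((i ∘ₗ p : Module.End k V) * A) - 1)
        = (dV * h + h * dV - ((i ∘ₗ p : Module.End k V) - 1)) * A
          - ((1 - δ * h) * A - 1)
          + h * (A * (dV + δ) - ((dV + δ) * A + A * δ * ((i ∘ₗ p : Module.End k V) * A) - δ * A)) := by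
      noncomm_ring
    rw [z2, z5, zK5] at hc
    simp only [mul_zero, zero_mul, sub_zero, add_zero, zero_add, neg_zero, zero_sub, sub_self] at hc
    exact sub_eq_zero.mp hc
  have zKH : (dV + δ) * (h * A) + (h * A) * (dV + δ)
      - ((1 + h * A * δ) * ((i ∘ₗ p : Module.End k V) * A) - 1) = 0 := sub_eq_zero.mpr KH
  -- KI : (d+δ)(1+hAδ) = (1+hAδ)d + (1+hAδ)((ip)(Aδ))
  have KI : (dV + δ) * (1 + h * A * δ)
      = (1 + h * A * δ) * dV + (1 + h * A * δ) * ((i ∘ₗ p : Module.End k V) * (A * δ)) := by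
    have hc : (dV + δ) * (1 + h * A * δ)
        - ((1 + h * A * δ) * dV + (1 + h * A * δ) * ((i ∘ₗ p : Module.End k V) * (A * δ)))
        = -(h * A * ((dV + δ) * (dV + δ))) + h * A * (dV * dV)
          + ((dV + δ) * (h * A) + (h * A) * (dV + δ)
            - ((1 + h * A * δ) * ((i ∘ₗ p : Module.End k V) * A) - 1)) * δ := by noncomm_ring
    rw [hpert, hdV, zKH] at hc
    simp only [mul_zero, zero_mul, sub_zero, add_zero, zero_add, neg_zero, zero_sub, sub_self] at hc
    exact sub_eq_zero.mp hc
  -- h' = hA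
  have Kh' : h + h * A * δ * h = h * A := by
    have hc : h + h * A * δ * h - h * A = -(h * (A * (1 - δ * h) - 1)) := by noncomm_ring
    rw [z6] at hc
    simp only [mul_zero, neg_zero] at hc
    exact sub_eq_zero.mp hc
  refine ⟨?_, ?_, ?_, ?_, ?_, ?_, ?_, ?_⟩
  · -- dW' * dW' = 0
    have u2 : dW ∘ₗ (p ∘ₗ ((A * δ) ∘ₗ i)) = p ∘ₗ ((dV * (A * δ)) ∘ₗ i) := by
      simp only [Module.End.mul_eq_comp, ← LinearMap.comp_assoc, hpchain]
    have u3 : (p ∘ₗ ((A * δ) ∘ₗ i)) ∘ₗ dW = p ∘ₗ (((A * δ) * dV) ∘ₗ i) := by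
      simp only [Module.End.mul_eq_comp, LinearMap.comp_assoc, ← hichain]
    have u4 : (p ∘ₗ ((A * δ) ∘ₗ i)) ∘ₗ (p ∘ₗ ((A * δ) ∘ₗ i))
        = p ∘ₗ (((A * δ) * ((i ∘ₗ p : Module.End k V) * (A * δ))) ∘ₗ i) := by
      simp only [Module.End.mul_eq_comp, LinearMap.comp_assoc]
    rw [Module.End.mul_eq_comp, LinearMap.comp_add, LinearMap.add_comp, LinearMap.add_comp,
      hdWc, u2, u3, u4, zero_add, ← LinearMap.comp_add, ← LinearMap.add_comp,
      ← LinearMap.comp_add, ← LinearMap.add_comp,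
      show (A * δ) * dV + (dV * (A * δ) + (A * δ) * ((i ∘ₗ p : Module.End k V) * (A * δ)))
          = (0 : Module.End k V) from by rw [← K6]; noncomm_ring,
      LinearMap.zero_comp, LinearMap.comp_zero]
  · -- p' ∘ i' = id
    have t2 : p ∘ₗ ((h * A * δ) ∘ₗ i) = 0 := by
      simp only [Module.End.mul_eq_comp, ← LinearMap.comp_assoc, hph, LinearMap.zero_comp]
    have t3 : (p ∘ₗ (A * δ * h)) ∘ₗ i = 0 := by
      simp only [Module.End.mul_eq_comp, LinearMap.comp_assoc, hhi, LinearMap.comp_zero]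
    have t4 : (p ∘ₗ (A * δ * h)) ∘ₗ ((h * A * δ) ∘ₗ i) = 0 := by
      simp only [Module.End.mul_eq_comp, LinearMap.comp_assoc, hh0W, LinearMap.comp_zero]
    rw [LinearMap.add_comp, LinearMap.comp_add, LinearMap.comp_add, hpi, t2, t3, t4]
    simp
  · -- homotopy equation
    have hip : ((i + (h * A * δ) ∘ₗ i) ∘ₗ (p + p ∘ₗ (A * δ * h)) : Module.End k V)
        = (i ∘ₗ p : Module.End k V) + ((h * A * δ) * (i ∘ₗ p : Module.End k V)
          + ((i ∘ₗ p : Module.End k V) * (A * δ * h)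
          + (h * A * δ) * ((i ∘ₗ p : Module.End k V) * (A * δ * h)))) := by
      simp only [Module.End.mul_eq_comp, LinearMap.comp_add, LinearMap.add_comp,
        LinearMap.comp_assoc, add_assoc]
    rw [Kh', hip]
    have hc : (dV + δ) * (h * A) + (h * A) * (dV + δ)
        - (((i ∘ₗ p : Module.End k V) + ((h * A * δ) * (i ∘ₗ p : Module.End k V)
          + ((i ∘ₗ p : Module.End k V) * (A * δ * h)
          + (h * A * δ) * ((i ∘ₗ p : Module.End k V) * (A * δ * h))))) - 1)
        = ((dV + δ) * (h * A) + (h * A) * (dV + δ)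
            - ((1 + h * A * δ) * ((i ∘ₗ p : Module.End k V) * A) - 1))
          + (1 + h * A * δ) * ((i ∘ₗ p : Module.End k V) * (A * (1 - δ * h) - 1)) := by
      noncomm_ring
    rw [zKH, z6] at hc
    simp only [mul_zero, zero_mul, sub_zero, add_zero, zero_add, neg_zero, zero_sub, sub_self] at hc
    exact sub_eq_zero.mp hc
  · -- dW' ∘ p' = p' ∘ (dV + δ)
    have l1 : dW ∘ₗ (p + p ∘ₗ (A * δ * h)) = p ∘ₗ (dV + dV * (A * δ * h)) := by
      simp only [LinearMap.comp_add, Module.End.mul_eq_comp, ← LinearMap.comp_assoc, hpchain]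
    have l2 : (p ∘ₗ ((A * δ) ∘ₗ i)) ∘ₗ (p + p ∘ₗ (A * δ * h))
        = p ∘ₗ ((A * δ) * ((i ∘ₗ p : Module.End k V) * (1 + A * δ * h))) := by
      simp only [Module.End.mul_eq_comp, LinearMap.comp_add, LinearMap.add_comp, Module.End.one_eq_id,
        LinearMap.comp_id, LinearMap.id_comp, ← LinearMap.comp_assoc, add_assoc]
    have r1 : (p + p ∘ₗ (A * δ * h)) ∘ₗ (dV + δ) = p ∘ₗ ((1 + A * δ * h) * (dV + δ)) := by
      simp only [Module.End.mul_eq_comp, LinearMap.comp_add, LinearMap.add_comp, Module.End.one_eq_id,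
        LinearMap.comp_id, LinearMap.id_comp, ← LinearMap.comp_assoc, add_assoc]
    have hc : (dV + dV * (A * δ * h)) + (A * δ) * ((i ∘ₗ p : Module.End k V) * (1 + A * δ * h))
        = (1 + A * δ * h) * (dV + δ) := by
      have hd : (dV + dV * (A * δ * h)) + (A * δ) * ((i ∘ₗ p : Module.End k V) * (1 + A * δ * h))
          - (1 + A * δ * h) * (dV + δ)
          = -(A * (dV + δ) - ((dV + δ) * A + A * δ * ((i ∘ₗ p : Module.End k V) * A) - δ * A))
            - dV * (A * (1 - δ * h) - 1)
            - (A * δ) * ((i ∘ₗ p : Module.End k V) * (A * (1 - δ * h) - 1))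
            + (A * (1 - δ * h) - 1) * (dV + δ) := by noncomm_ring
      rw [zK5, z6] at hd
      simp only [mul_zero, zero_mul, sub_zero, add_zero, zero_add, neg_zero, zero_sub,
        sub_self] at hd
      exact sub_eq_zero.mp hd
    rw [LinearMap.add_comp, l1, l2, r1, ← LinearMap.comp_add, hc]
  · -- (dV+δ) ∘ i' = i' ∘ dW'
    have r1 : (dV + δ) ∘ₗ (i + (h * A * δ) ∘ₗ i) = ((dV + δ) * (1 + h * A * δ)) ∘ₗ i := by
      simp only [Module.End.mul_eq_comp, LinearMap.comp_add, LinearMap.add_comp, Module.End.one_eq_id,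
        LinearMap.comp_id, LinearMap.id_comp, LinearMap.comp_assoc, add_assoc]
    have r2 : (i + (h * A * δ) ∘ₗ i) ∘ₗ (dW + p ∘ₗ ((A * δ) ∘ₗ i))
        = ((1 + h * A * δ) * dV + (1 + h * A * δ) * ((i ∘ₗ p : Module.End k V) * (A * δ))) ∘ₗ i := by
      simp only [Module.End.mul_eq_comp, LinearMap.comp_add, LinearMap.add_comp, Module.End.one_eq_id,
        LinearMap.comp_id, LinearMap.id_comp, LinearMap.comp_assoc, ← hichain, add_assoc]
    rw [r1, r2, KI]
  · -- h' ∘ i' = 0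
    have t1 : h ∘ₗ ((h * A * δ) ∘ₗ i) = 0 := by
      simp only [Module.End.mul_eq_comp, LinearMap.comp_assoc, hh0W, LinearMap.comp_zero]
    have t2 : (h * A * δ * h) ∘ₗ i = 0 := by
      simp only [Module.End.mul_eq_comp, LinearMap.comp_assoc, hhi, LinearMap.comp_zero]
    have t3 : (h * A * δ * h) ∘ₗ ((h * A * δ) ∘ₗ i) = 0 := by
      simp only [Module.End.mul_eq_comp, LinearMap.comp_assoc, hh0W, LinearMap.comp_zero]
    rw [LinearMap.add_comp, LinearMap.comp_add, LinearMap.comp_add, hhi, t1, t2, t3]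
    simp
  · -- p' ∘ h' = 0
    have s2 : p ∘ₗ (h * A * δ * h) = 0 := by
      simp only [Module.End.mul_eq_comp, ← LinearMap.comp_assoc, hph, LinearMap.zero_comp]
    have s3 : (p ∘ₗ (A * δ * h)) ∘ₗ h = 0 := by
      simp only [Module.End.mul_eq_comp, LinearMap.comp_assoc, hhc, LinearMap.comp_zero]
    have s4 : (p ∘ₗ (A * δ * h)) ∘ₗ (h * A * δ * h) = 0 := by
      simp only [Module.End.mul_eq_comp, LinearMap.comp_assoc, hh0V, LinearMap.comp_zero]
    rw [LinearMap.add_comp, LinearMap.comp_add, LinearMap.comp_add, hph, s2, s3, s4]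
    simp
  · -- h' * h' = 0
    have hc : (h + h * A * δ * h) * (h + h * A * δ * h)
        = h * h + ((h * h) * (A * δ * h) + (h * A * δ * ((h * h))
          + h * A * δ * ((h * h) * (A * δ * h)))) := by noncomm_ring
    rw [hc, hh2]
    simp only [mul_zero, zero_mul, add_zero, zero_add]
end
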